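/- arXiv:2210.09700 — 2 statements merged into one kernel-verified Lean document; each statement's English description precedes it below -/
import Mathlib

section
/- Let d ≥ 1 and let s, r be integers with 1 ≤ s ≤ d, 1 ≤ r ≤ d, s + r ≥ d + 1, and s + r ≡ d + 1 (mod 2). Then there exist a cycle σ₁ of length s and a cycle σ₂ of length r in the symmetric group S_d such that the product σ₁ σ₂ is a cycle of length d. -/
/-- The cycle type of a permutation of `Fin n`, as a partition of `n`:
the lengths of the cycles in the disjoint cycle decomposition, counting
each fixed point as a part equal to `1`. -/
def fullCycleType {n : ℕ} (σ : Equiv.Perm (Fin n)) : Multiset ℕ :=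
  σ.cycleType + Multiset.replicate (n - σ.support.card) 1

open Equiv Equiv.Perm Finset

-- insertion lemma
theorem cycle_insert {α : Type*} [DecidableEq α] [Fintype α] {σ : Perm α} {a b : α}
    (hσ : σ.IsCycle) (ha : σ a ≠ a) (hb : σ b = b) :
    (σ * Equiv.swap a b).IsCycle ∧ (σ * Equiv.swap a b).support = insert b σ.support := by
  have hab : a ≠ b := by rintro rfl; exact ha hb
  set g := σ * Equiv.swap a b with hg
  have hga : g a = b := by simp [hg, Equiv.swap_apply_left, hb]
  have hgb : g b = σ a := by simp [hg, Equiv.swap_apply_right]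
  have hgx : ∀ x, x ≠ a → x ≠ b → g x = σ x := by
    intro x hxa hxb; simp [hg, Equiv.swap_apply_of_ne_of_ne hxa hxb]
  have hσab : σ a ≠ b := fun h => hab (σ.injective (h.trans hb.symm))
  have hsupp : g.support = insert b σ.support := by
    ext x
    by_cases hxa : x = a
    · subst hxa; simp [mem_support, hga, Ne.symm hab, mem_support.2 ha]
    by_cases hxb : x = b
    · subst hxb; simp [mem_support, hgb, hσab]
    · simp [mem_support, hgx x hxa hxb, hxb]
  refine ⟨⟨a, by rw [hga]; exact Ne.symm hab, ?_⟩, hsupp⟩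
  intro y hy
  have hy' : y ∈ g.support := mem_support.2 hy
  rw [hsupp, mem_insert] at hy'
  rcases hy' with rfl | hy'
  · exact ⟨1, by simpa using hga⟩
  -- y ∈ σ.support
  obtain ⟨i, hi⟩ := hσ.exists_pow_eq ha (mem_support.1 hy')
  subst hi
  clear hy hy'
  induction i with
  | zero => exact ⟨0, by simp⟩
  | succ n ih =>
    have key : ∀ z, σ z ≠ z → g.SameCycle a z → g.SameCycle a (σ z) := by
      intro z hz hsc
      by_cases hza : z = a
      · subst hza
        refine SameCycle.trans ⟨1, by simpa using hga⟩ ?_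
        exact ⟨1, by simpa using hgb⟩
      · have hzb : z ≠ b := fun h => hz (h ▸ (h ▸ hb : σ z = z))
        exact hsc.trans ⟨1, by simpa using (hgx z hza hzb)⟩
    have horb : ∀ m : ℕ, σ ((σ ^ m) a) ≠ (σ ^ m) a := by
      intro m h
      apply ha
      apply (σ ^ m).injective
      rw [← Equiv.Perm.mul_apply, ← pow_succ, pow_succ', Equiv.Perm.mul_apply, h]
    have h2 := key _ (horb n) ih
    rw [pow_succ', Equiv.Perm.mul_apply]
    exact h2

/-- `σ` is the identity (when `k = 1`) or a cycle of length `k`. -/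
def PCyc {d : ℕ} (σ : Perm (Fin d)) (k : ℕ) : Prop :=
  (k = 1 ∧ σ = 1) ∨ (σ.IsCycle ∧ σ.support.card = k)

theorem key (d : ℕ) (hd2 : 2 ≤ d) :
    ∀ s r : ℕ, 1 ≤ s → s ≤ d → 1 ≤ r → r ≤ d → d + 1 ≤ s + r →
      (s + r) % 2 = (d + 1) % 2 →
      ∃ σ₁ σ₂ : Perm (Fin d), PCyc σ₁ s ∧ PCyc σ₂ r ∧ σ₁ * σ₂ = finRotate d := by
  intro s
  induction s with
  | zero => intro r h1; exact absurd h1 (by omega)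
  | succ s ih =>
    intro r hs1 hsd hr1 hrd hsum hpar
    have hccyc : (finRotate d).IsCycle := isCycle_finRotate_of_le hd2
    have hcsupp : (finRotate d).support = Finset.univ := support_finRotate_of_le hd2
    have hccard : (finRotate d).support.card = d := by
      rw [hcsupp, Finset.card_univ, Fintype.card_fin]
    by_cases hr : r = 1
    · -- r = 1 : then s + 1 = d, take the full cycle and the identity
      subst hr
      have hsd' : s + 1 = d := by omega
      exact ⟨finRotate d, 1, Or.inr ⟨hccyc, by rw [hccard, hsd']⟩,
        Or.inl ⟨rfl, rfl⟩, mul_one _⟩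
    · have hr2 : 2 ≤ r := by omega
      by_cases hs0 : s = 0
      · -- s + 1 = 1 : then r = d
        subst hs0
        have hrd' : r = d := by omega
        exact ⟨1, finRotate d, Or.inl ⟨rfl, rfl⟩,
          Or.inr ⟨hccyc, by rw [hccard, hrd']⟩, one_mul _⟩
      · have hs1' : 1 ≤ s := by omega
        by_cases hsum2 : d + 2 ≤ s + 1 + r
        · -- growing step : from an `s`-cycle and an `(r-1)`-cycle
          have hsum3 : d + 3 ≤ s + 1 + r := by omega
          obtain ⟨σ₁, σ₂, P1, P2, hprod⟩ :=
            ih (r - 1) hs1' (by omega) (by omega) (by omega) (by omega) (by omega)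
          have hσ₁ : σ₁.IsCycle ∧ σ₁.support.card = s := by
            rcases P1 with ⟨h, _⟩ | h
            · omega
            · exact h
          have hσ₂ : σ₂.IsCycle ∧ σ₂.support.card = r - 1 := by
            rcases P2 with ⟨h, _⟩ | h
            · omega
            · exact h
          have hcover : ∀ x, σ₂ x = x → σ₁ x ≠ x := by
            intro x h2 h1
            have hx : (finRotate d) x = x := by
              rw [← hprod, Equiv.Perm.mul_apply, h2, h1]
            have := mem_support.1 (hcsupp ▸ Finset.mem_univ x)
            exact this hx
          obtain ⟨b, hb⟩ : ∃ b, b ∉ σ₁.support := by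
            by_contra h
            push_neg at h
            have hu : σ₁.support = Finset.univ := Finset.eq_univ_iff_forall.2 h
            have hcard := hσ₁.2
            rw [hu, Finset.card_univ, Fintype.card_fin] at hcard
            omega
          obtain ⟨a, ha⟩ : ∃ a, a ∉ σ₂.support := by
            by_contra h
            push_neg at h
            have h' : σ₂.support = Finset.univ := Finset.eq_univ_iff_forall.2 h
            have := hσ₂.2
            rw [h', Finset.card_univ, Fintype.card_fin] at this
            omega
          have ha2 : σ₂ a = a := notMem_support.1 ha
          have hb1 : σ₁ b = b := notMem_support.1 hb
          have ha1 : σ₁ a ≠ a := hcover a ha2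
          have hb2 : σ₂ b ≠ b := fun h => hcover b h hb1
          obtain ⟨hc1, hsupp1⟩ := cycle_insert hσ₁.1 ha1 hb1
          have hcard1 : (σ₁ * Equiv.swap a b).support.card = s + 1 := by
            rw [hsupp1, Finset.card_insert_of_notMem hb, hσ₁.2]
          have hb2' : σ₂⁻¹ b ≠ b := by
            intro h
            apply hb2
            conv_lhs => rw [← h]
            simp
          have ha2' : σ₂⁻¹ a = a := by
            conv_lhs => rw [← ha2]
            simp
          obtain ⟨hc2, hsupp2⟩ := cycle_insert hσ₂.1.inv hb2' ha2'
          have hinv : (σ₂⁻¹ * Equiv.swap b a)⁻¹ = Equiv.swap a b * σ₂ := by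
            rw [mul_inv_rev, inv_inv, Equiv.swap_inv, Equiv.swap_comm]
          refine ⟨σ₁ * Equiv.swap a b, Equiv.swap a b * σ₂,
            Or.inr ⟨hc1, hcard1⟩, Or.inr ⟨?_, ?_⟩, ?_⟩
          · rw [← hinv]; exact hc2.inv
          · rw [← hinv, Equiv.Perm.support_inv, hsupp2,
              Finset.card_insert_of_notMem (by rwa [Equiv.Perm.support_inv]),
              Equiv.Perm.support_inv, hσ₂.2]
            omega
          · rw [mul_assoc, ← mul_assoc (Equiv.swap a b), Equiv.swap_mul_self, one_mul, hprod]
        · -- shifting step : from an `s`-cycle and an `(r+1)`-cycle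
          have hsum' : s + 1 + r = d + 1 := by omega
          obtain ⟨σ₁, σ₂, P1, P2, hprod⟩ :=
            ih (r + 1) hs1' (by omega) (by omega) (by omega) (by omega) (by omega)
          have hσ₂ : σ₂.IsCycle ∧ σ₂.support.card = r + 1 := by
            rcases P2 with ⟨h, _⟩ | h
            · omega
            · exact h
          -- find `b` fixed by `σ₁` with `σ₂ b` moved by `σ₁`
          have hstep : ∃ b, σ₁ b = b ∧ σ₂ b ≠ b ∧
              ((σ₁ * Equiv.swap (σ₂ b) b).IsCycle ∧
                (σ₁ * Equiv.swap (σ₂ b) b).support.card = s + 1) := by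
            rcases P1 with ⟨hseq, rfl⟩ | ⟨hc1, hcard1⟩
            · -- σ₁ = 1, s = 1
              obtain ⟨b, hb, -⟩ := hσ₂.1
              refine ⟨b, rfl, hb, ?_, ?_⟩
              · rw [one_mul]; exact isCycle_swap hb
              · rw [one_mul, Equiv.Perm.card_support_swap hb]
                omega
            · -- σ₁ a genuine cycle
              obtain ⟨b, hb1, hb2⟩ : ∃ b, σ₁ b = b ∧ σ₁ (σ₂ b) ≠ σ₂ b := by
                by_contra h
                push_neg at h
                obtain ⟨a, ha, -⟩ := hc1
                obtain ⟨b0, hb0⟩ : ∃ b0, b0 ∉ σ₁.support := by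
                  by_contra h'
                  push_neg at h'
                  have h'' : σ₁.support = Finset.univ := Finset.eq_univ_iff_forall.2 h'
                  rw [h'', Finset.card_univ, Fintype.card_fin] at hcard1
                  omega
                have hfix : ∀ x, σ₁ x = x → σ₁ ((finRotate d) x) = (finRotate d) x := by
                  intro x hx
                  have h2 := h x hx
                  have hcx : (finRotate d) x = σ₂ x := by
                    rw [← hprod, Equiv.Perm.mul_apply, h2]
                  rw [hcx]
                  exact h2
                have stab : ∀ i : ℕ, σ₁ (((finRotate d) ^ i) b0) = ((finRotate d) ^ i) b0 := by
                  intro i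
                  induction i with
                  | zero => simpa using notMem_support.1 hb0
                  | succ n ihn =>
                    rw [pow_succ', Equiv.Perm.mul_apply]
                    exact hfix _ ihn
                have hmv : ∀ x : Fin d, (finRotate d) x ≠ x := fun x =>
                  mem_support.1 (hcsupp ▸ Finset.mem_univ x)
                obtain ⟨i, hi⟩ := hccyc.exists_pow_eq (hmv b0) (hmv a)
                have hstab := stab i
                rw [hi] at hstab
                exact ha hstab
              have hσ₂b : σ₂ b ≠ b := fun h => hb2 (by rw [h]; exact hb1)
              obtain ⟨hc', hsupp'⟩ := cycle_insert hc1 hb2 hb1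
              refine ⟨b, hb1, hσ₂b, hc', ?_⟩
              rw [hsupp', Finset.card_insert_of_notMem (notMem_support.2 hb1), hcard1]
          obtain ⟨b, hb1, hb2, hc1', hcard1'⟩ := hstep
          have hne2 : σ₂ (σ₂ b) ≠ b := by
            intro h
            have := hσ₂.1.eq_swap_of_apply_apply_eq_self hb2 h
            rw [this, Equiv.Perm.card_support_swap hb2.symm] at hσ₂
            omega
          have hτ : Equiv.swap (σ₂ b) b = Equiv.swap b (σ₂ b) := Equiv.swap_comm _ _
          refine ⟨σ₁ * Equiv.swap (σ₂ b) b, Equiv.swap (σ₂ b) b * σ₂,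
            Or.inr ⟨hc1', hcard1'⟩, Or.inr ⟨?_, ?_⟩, ?_⟩
          · rw [hτ]; exact hσ₂.1.swap_mul hb2 hne2
          · rw [hτ, support_swap_mul_eq _ _ hne2,
              Finset.card_sdiff_of_subset (Finset.singleton_subset_iff.2 (mem_support.2 hb2)),
              hσ₂.2, Finset.card_singleton]
            omega
          · rw [mul_assoc, ← mul_assoc (Equiv.swap (σ₂ b) b), Equiv.swap_mul_self,
              one_mul, hprod]

theorem ft_eq {d k : ℕ} (hd : 1 ≤ d) {σ : Perm (Fin d)} (h : PCyc σ k) :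
    fullCycleType σ = k ::ₘ Multiset.replicate (d - k) 1 := by
  rcases h with ⟨rfl, rfl⟩ | ⟨hc, hcard⟩
  · simp only [fullCycleType, Equiv.Perm.cycleType_one, Equiv.Perm.support_one,
      Finset.card_empty, Nat.sub_zero, zero_add]
    rw [← Multiset.replicate_succ]
    congr 1
    omega
  · rw [fullCycleType, hc.cycleType, hcard]
    rfl


/-- Lemma 2.2: if `1 ≤ s, r ≤ d`, `s + r ≥ d + 1` and `s + r ≡ d + 1 (mod 2)`,
then there exist an `s`-cycle `σ₁` and an `r`-cycle `σ₂` in `S_d` whose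
product `σ₁ σ₂` is a `d`-cycle.  (A cycle of length `k` is encoded by its
cycle type being `(k, 1, …, 1)`, counting fixed points as parts equal to 1.) -/
theorem lem_2_2 (d s r : ℕ) (hd : 1 ≤ d)
    (hs1 : 1 ≤ s) (hsd : s ≤ d) (hr1 : 1 ≤ r) (hrd : r ≤ d)
    (hsum : d + 1 ≤ s + r) (hpar : s + r ≡ d + 1 [MOD 2]) :
    ∃ σ₁ σ₂ : Equiv.Perm (Fin d),
      fullCycleType σ₁ = s ::ₘ Multiset.replicate (d - s) 1 ∧
      fullCycleType σ₂ = r ::ₘ Multiset.replicate (d - r) 1 ∧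
      fullCycleType (σ₁ * σ₂) = {d} := by
  rcases Nat.lt_or_ge d 2 with hd1 | hd2
  · have hd' : d = 1 := by omega
    subst hd'
    have hs : s = 1 := by omega
    have hr : r = 1 := by omega
    subst hs; subst hr
    refine ⟨1, 1, ft_eq hd (Or.inl ⟨rfl, rfl⟩), ft_eq hd (Or.inl ⟨rfl, rfl⟩), ?_⟩
    have := ft_eq hd (Or.inl ⟨rfl, mul_one 1⟩)
    simpa using this
  · obtain ⟨σ₁, σ₂, P1, P2, hprod⟩ := key d hd2 s r hs1 hsd hr1 hrd hsum hpar
    refine ⟨σ₁, σ₂, ft_eq hd P1, ft_eq hd P2, ?_⟩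
    have hP : PCyc (σ₁ * σ₂) d := Or.inr ⟨by rw [hprod]; exact isCycle_finRotate_of_le hd2,
      by rw [hprod, support_finRotate_of_le hd2, Finset.card_univ, Fintype.card_fin]⟩
    rw [ft_eq hd hP, Nat.sub_self]
    rfl
end

section
/- Let n and k be positive integers and let τ₁, τ₂, σ be permutations in the symmetric group S_n with σ = τ₁ τ₂. Assume: σ is a single cycle; τ₁ is a product of pairwise disjoint cycles each of length k whose supports together cover all of {1,…,n} (so n = pk for some p); every cycle in the disjoint cycle decomposition of τ₂ has length at most k; and the subgroup generated by τ₁ and τ₂ acts transitively on {1, …, n}. Then every cycle μ in the disjoint cycle decomposition of τ₁ has at least 2 elements of its support in common with the support of σ. -/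
/-- The claim in Subcase 2.1 of the proof of Proposition 2.1: if
`σ = τ₁ τ₂` in `S_n` with `σ` a single cycle, `τ₁` a product of pairwise
disjoint `k`-cycles whose supports cover `{1,…,n}`, every cycle of `τ₂` of
length at most `k`, and `⟨τ₁, τ₂⟩` transitive on `{1,…,n}`, then every cycle
`μ` in the disjoint cycle decomposition of `τ₁` has at least `2` elements of
its support in common with the support of `σ`. -/
theorem subcase_2_1_claim (n k : ℕ) (hn : 0 < n) (hk : 0 < k)
    (τ₁ τ₂ σ : Equiv.Perm (Fin n))
    (hστ : σ = τ₁ * τ₂)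
    (hσ : σ.IsCycle)
    (hτ₁len : ∀ c ∈ τ₁.cycleFactorsFinset, c.support.card = k)
    (hτ₁cover : τ₁.support = Finset.univ)
    (hτ₂len : ∀ c ∈ τ₂.cycleFactorsFinset, c.support.card ≤ k)
    (htrans : ∀ x y : Fin n,
      ∃ g ∈ Subgroup.closure ({τ₁, τ₂} : Set (Equiv.Perm (Fin n))), g x = y) :
    ∀ μ ∈ τ₁.cycleFactorsFinset, 2 ≤ (μ.support ∩ σ.support).card := by
  intro μ hμ
  by_contra hcard
  push_neg at hcard
  obtain ⟨hμc, hμeq⟩ := Equiv.Perm.mem_cycleFactorsFinset_iff.mp hμ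
  set S := μ.support with hSdef
  have hSk : S.card = k := hτ₁len μ hμ
  have hSne : S.Nonempty := Finset.card_pos.mp (hSk ▸ hk)
  -- τ₁ agrees with μ on S, and S is invariant
  have hτ₁S : ∀ x ∈ S, τ₁ x = μ x := fun x hx => (hμeq x hx).symm
  have hμS : ∀ x ∈ S, μ x ∈ S := fun x hx => Equiv.Perm.apply_mem_support.mpr hx
  have hμinvS : ∀ x ∈ S, μ⁻¹ x ∈ S := by
    intro x hx
    rw [hSdef, ← Equiv.Perm.support_inv]
    apply Equiv.Perm.apply_mem_support.mpr
    rw [Equiv.Perm.support_inv]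
    exact hx
  have hτ₁invS : ∀ x ∈ S, τ₁⁻¹ x = μ⁻¹ x := by
    intro x hx
    have h1 : μ⁻¹ x ∈ S := hμinvS x hx
    have h2 : τ₁ (μ⁻¹ x) = x := by rw [hτ₁S _ h1]; simp
    calc τ₁⁻¹ x = τ₁⁻¹ (τ₁ (μ⁻¹ x)) := by rw [h2]
    _ = μ⁻¹ x := by simp
  have hτ₂ : τ₂ = τ₁⁻¹ * σ := by rw [hστ]; group
  have hfix : ∀ x ∈ S, σ x = x → τ₂ x = μ⁻¹ x := by
    intro x hx h
    rw [hτ₂, Equiv.Perm.mul_apply, h, hτ₁invS x hx]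
  -- a set invariant under τ₁ and τ₂ is everything
  have closed_univ : ∀ T : Finset (Fin n), T.Nonempty →
      (∀ x ∈ T, τ₁ x ∈ T) → (∀ x ∈ T, τ₂ x ∈ T) → T = Finset.univ := by
    rintro T ⟨x₀, hx₀⟩ h1 h2
    have key : ∀ g : Equiv.Perm (Fin n),
        g ∈ Subgroup.closure ({τ₁, τ₂} : Set (Equiv.Perm (Fin n))) →
        ∀ x ∈ T, g x ∈ T := by
      intro g hg
      induction hg using Subgroup.closure_induction with
      | mem x hx =>
        rcases hx with rfl | rfl
        · exact h1
        · exact h2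
      | one => simp
      | mul x y hx hy px py =>
        intro z hz
        exact px _ (py z hz)
      | inv x hx px =>
        intro z hz
        have himg : T.image x = T :=
          Finset.eq_of_subset_of_card_le
            (by intro w hw; obtain ⟨u, hu, rfl⟩ := Finset.mem_image.mp hw; exact px u hu)
            (le_of_eq (Finset.card_image_of_injective T x.injective).symm)
        have : z ∈ T.image x := himg.symm ▸ hz
        obtain ⟨u, hu, rfl⟩ := Finset.mem_image.mp this
        simpa using hu
    apply Finset.eq_univ_iff_forall.mpr
    intro y
    obtain ⟨g, hg, hgx⟩ := htrans x₀ y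
    exact hgx ▸ key g hg x₀ hx₀
  have h2σ := hσ.two_le_card_support
  -- split on the size of the intersection
  have h01 : (S ∩ σ.support).card = 0 ∨ (S ∩ σ.support).card = 1 := by omega
  rcases h01 with h0 | h1
  · -- empty intersection: S is τ₂-invariant, so S = univ, contradiction
    have hempty : S ∩ σ.support = ∅ := Finset.card_eq_zero.mp h0
    have hfixS : ∀ x ∈ S, σ x = x := by
      intro x hx
      by_contra hne
      exact absurd (Finset.mem_inter.mpr ⟨hx, Equiv.Perm.mem_support.mpr hne⟩)
        (by simp [hempty])
    have hSuniv : S = Finset.univ :=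
      closed_univ S hSne (fun x hx => hτ₁S x hx ▸ hμS x hx)
        (fun x hx => (hfix x hx (hfixS x hx)) ▸ hμinvS x hx)
    obtain ⟨b, hb⟩ := Finset.card_pos.mp (by omega : 0 < σ.support.card)
    exact absurd (Finset.mem_inter.mpr ⟨hSuniv ▸ Finset.mem_univ b, hb⟩)
      (by simp [hempty])
  · -- intersection is a single point a
    obtain ⟨a, ha⟩ := Finset.card_eq_one.mp h1
    have haS : a ∈ S := (Finset.mem_inter.mp (ha ▸ Finset.mem_singleton_self a)).1
    have haσ : a ∈ σ.support := (Finset.mem_inter.mp (ha ▸ Finset.mem_singleton_self a)).2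
    have hfix' : ∀ x ∈ S, x ≠ a → σ x = x := by
      intro x hx hne
      by_contra hσx
      have : x ∈ S ∩ σ.support := Finset.mem_inter.mpr ⟨hx, Equiv.Perm.mem_support.mpr hσx⟩
      rw [ha, Finset.mem_singleton] at this
      exact hne this
    by_cases hbS : σ a ∈ S
    · -- S is again invariant under τ₂, so S = univ, contradicting |S ∩ supp σ| = 1
      have hτ₂S : ∀ x ∈ S, τ₂ x ∈ S := by
        intro x hx
        by_cases hxa : x = a
        · subst hxa
          rw [hτ₂, Equiv.Perm.mul_apply, hτ₁invS _ hbS]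
          exact hμinvS _ hbS
        · rw [hfix x hx (hfix' x hx hxa)]
          exact hμinvS x hx
      have hSuniv : S = Finset.univ :=
        closed_univ S hSne (fun x hx => hτ₁S x hx ▸ hμS x hx) hτ₂S
      have : S ∩ σ.support = σ.support := by rw [hSuniv]; simp
      rw [this] at h1
      omega
    · -- the τ₂-cycle through a contains S and τ₂ a ∉ S: length ≥ k + 1
      have hτ₂a : τ₂ a = τ₁⁻¹ (σ a) := by rw [hτ₂]; rfl
      have hτ₂ane : τ₂ a ≠ a := by
        intro h
        have : σ a = τ₁ a := by
          have h3 := congrArg τ₁ (hτ₂a ▸ h)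
          simp only [Equiv.Perm.inv_def, Equiv.apply_symm_apply] at h3
          exact h3
        rw [hτ₁S a haS] at this
        exact hbS (this ▸ hμS a haS)
      have haτ₂ : a ∈ τ₂.support := Equiv.Perm.mem_support.mpr hτ₂ane
      have hbnotS : τ₂ a ∉ S := by
        intro h
        have : τ₁ (τ₂ a) = σ a := by rw [hτ₂a]; simp
        rw [hτ₁S _ h] at this
        exact hbS (this ▸ hμS _ h)
      -- every point of S is in the same τ₂-cycle as a
      have hSC : ∀ j : ℕ, Equiv.Perm.SameCycle τ₂ ((μ ^ j) a) a := by
        intro j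
        induction j with
        | zero => simp [Equiv.Perm.SameCycle.refl]
        | succ j ih =>
          by_cases hya : (μ ^ (j + 1)) a = a
          · rw [hya]
          · have hyS : (μ ^ (j + 1)) a ∈ S :=
              Equiv.Perm.support_pow_le μ (j + 1)
                (Equiv.Perm.apply_mem_support.mpr (Equiv.Perm.mem_support.mpr hya))
            have hstep : τ₂ ((μ ^ (j + 1)) a) = (μ ^ j) a := by
              rw [hfix _ hyS (hfix' _ hyS hya)]
              have : (μ ^ (j + 1)) a = μ ((μ ^ j) a) := by
                rw [pow_succ']; rfl
              rw [this]; simp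
            have h1 : Equiv.Perm.SameCycle τ₂ ((μ ^ (j + 1)) a) ((μ ^ j) a) :=
              ⟨1, by simpa using hstep⟩
            exact h1.trans ih
      have hSsub : S ⊆ (τ₂.cycleOf a).support := by
        intro x hx
        have hsc : Equiv.Perm.SameCycle μ a x :=
          hμc.sameCycle (Equiv.Perm.mem_support.mp haS) (Equiv.Perm.mem_support.mp hx)
        obtain ⟨i, _, _, hi⟩ := Equiv.Perm.SameCycle.exists_pow_eq μ hsc
        have : Equiv.Perm.SameCycle τ₂ a x := (hi ▸ hSC i).symm
        exact Equiv.Perm.mem_support_cycleOf_iff.mpr ⟨this, haτ₂⟩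
      have hbmem : τ₂ a ∈ (τ₂.cycleOf a).support :=
        Equiv.Perm.mem_support_cycleOf_iff.mpr ⟨⟨1, rfl⟩, haτ₂⟩
      have hins : insert (τ₂ a) S ⊆ (τ₂.cycleOf a).support := by
        intro x hx
        rcases Finset.mem_insert.mp hx with rfl | hx
        · exact hbmem
        · exact hSsub hx
      have hcard1 : (insert (τ₂ a) S).card = k + 1 := by
        rw [Finset.card_insert_of_notMem hbnotS, hSk]
      have hle : k + 1 ≤ (τ₂.cycleOf a).support.card := by
        rw [← hcard1]
        exact Finset.card_le_card hins
      have hle2 : (τ₂.cycleOf a).support.card ≤ k :=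
        hτ₂len _ (Equiv.Perm.cycleOf_mem_cycleFactorsFinset_iff.mpr haτ₂)
      omega
end
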